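/- Let p be a prime and k a positive integer divisible by p - 1. Suppose we are given integers α_1, ..., α_{p-1} coprime to p and pairs of integers (β_i, γ_i) for p ≤ i ≤ 2p-1 with p ∤ γ_i. Then the system ∑_{i=1}^{p-1} α_i x_i^k ≡ -∑_{i=p}^{2p-1} β_i x_i^k (mod p) together with ∑_{i=p}^{2p-1} γ_i x_i^k ≡ 0 (mod p) has a solution in integers x_1, ..., x_{2p-1} with x_{2p-1} not divisible by p. -/

import Mathlib

open Finset Pointwise

lemma subsetSum_card {p : ℕ} (hp : p.Prime) {ι : Type*} [DecidableEq ι] (g : ι → ZMod p)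
    (I : Finset ι) (hg : ∀ i ∈ I, g i ≠ 0) :
    min p (I.card + 1) ≤ (I.powerset.image (fun S => ∑ i ∈ S, g i)).card := by
  classical
  induction I using Finset.induction_on with
  | empty => simp
  | @insert a I ha ih =>
    have hga : g a ≠ 0 := hg a (mem_insert_self a I)
    have hgI : ∀ i ∈ I, g i ≠ 0 := fun i hi => hg i (mem_insert_of_mem hi)
    set A := I.powerset.image (fun S => ∑ i ∈ S, g i) with hA
    have hAne : A.Nonempty := ⟨∑ i ∈ (∅ : Finset ι), g i,
      mem_image.2 ⟨∅, by simp, rfl⟩⟩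
    have key : (insert a I).powerset.image (fun S => ∑ i ∈ S, g i)
        = ({(0 : ZMod p), g a} : Finset (ZMod p)) + A := by
      ext x
      simp only [hA, mem_image, mem_powerset, Finset.mem_add, mem_insert, mem_singleton]
      constructor
      · rintro ⟨S, hS, rfl⟩
        by_cases haS : a ∈ S
        · refine ⟨g a, Or.inr rfl, ∑ i ∈ S.erase a, g i, ⟨S.erase a, ?_, rfl⟩, ?_⟩
          · intro i hi
            have := hS (mem_of_mem_erase hi)
            rcases mem_insert.1 this with h | h
            · exact absurd (h ▸ hi) (notMem_erase a S)
            · exact h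
          · exact Finset.add_sum_erase S g haS
        · refine ⟨0, Or.inl rfl, ∑ i ∈ S, g i, ⟨S, ?_, rfl⟩, zero_add _⟩
          intro i hi
          rcases mem_insert.1 (hS hi) with h | h
          · exact absurd (h ▸ hi) haS
          · exact h
      · rintro ⟨y, hy, _, ⟨S, hS, rfl⟩, rfl⟩
        rcases hy with rfl | rfl
        · exact ⟨S, hS.trans (subset_insert a I), (zero_add _).symm⟩
        · have haS : a ∉ S := fun h => ha (hS h)
          exact ⟨insert a S, insert_subset_insert a hS,
            Finset.sum_insert haS⟩
    rw [key, card_insert_of_notMem ha]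
    have h2 : ({(0 : ZMod p), g a} : Finset (ZMod p)).card = 2 := by
      rw [card_insert_of_notMem (by simpa using hga.symm), card_singleton]
    have hcd := ZMod.cauchy_davenport hp (s := {(0 : ZMod p), g a}) (t := A)
      ⟨0, mem_insert_self _ _⟩ hAne
    rw [h2] at hcd
    have := ih hgI
    omega

lemma subsetSum_cover {p : ℕ} (hp : p.Prime) {ι : Type*} [DecidableEq ι] (g : ι → ZMod p)
    (I : Finset ι) (hg : ∀ i ∈ I, g i ≠ 0) (hcard : I.card = p - 1) (t : ZMod p) :
    ∃ S ⊆ I, ∑ i ∈ S, g i = t := by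
  haveI : NeZero p := ⟨hp.pos.ne'⟩
  have h1 := subsetSum_card hp g I hg
  rw [hcard] at h1
  have hp1 : p - 1 + 1 = p := by have := hp.two_le; omega
  rw [hp1, min_self] at h1
  have h2 : (I.powerset.image (fun S => ∑ i ∈ S, g i)).card ≤ Fintype.card (ZMod p) :=
    card_le_univ _
  rw [ZMod.card] at h2
  have : I.powerset.image (fun S => ∑ i ∈ S, g i) = univ := by
    apply eq_univ_of_card
    rw [ZMod.card]; omega
  have ht : t ∈ I.powerset.image (fun S => ∑ i ∈ S, g i) := this ▸ mem_univ t
  obtain ⟨S, hS, hSt⟩ := mem_image.1 ht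
  exact ⟨S, mem_powerset.1 hS, hSt⟩

theorem stmt_7 (p k : ℕ) (hp : p.Prime) (hk : 0 < k) (hdvd : (p - 1) ∣ k)
    (α : Fin (p - 1) → ℤ) (hα : ∀ i, ¬ (p : ℤ) ∣ α i)
    (β γ : Fin p → ℤ) (hγ : ∀ i, ¬ (p : ℤ) ∣ γ i) :
    ∃ (x : Fin (p - 1) → ℤ) (z : Fin p → ℤ),
      ¬ (p : ℤ) ∣ z ⟨p - 1, by have := hp.two_le; omega⟩ ∧
      (p : ℤ) ∣ (∑ i, α i * x i ^ k + ∑ i, β i * z i ^ k) ∧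
      (p : ℤ) ∣ ∑ i, γ i * z i ^ k := by
  classical
  have hp2 := hp.two_le
  set q : Fin p := ⟨p - 1, by omega⟩ with hq
  -- nonzero casts
  have hγ' : ∀ i, ((γ i : ZMod p) ≠ 0) := fun i h =>
    hγ i ((ZMod.intCast_zmod_eq_zero_iff_dvd _ p).1 h)
  have hα' : ∀ i, ((α i : ZMod p) ≠ 0) := fun i h =>
    hα i ((ZMod.intCast_zmod_eq_zero_iff_dvd _ p).1 h)
  -- find T' ⊆ univ.erase q with sum γ = -γ q
  have hcard1 : (Finset.univ.erase q).card = p - 1 := by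
    rw [card_erase_of_mem (mem_univ q), card_univ, Fintype.card_fin]
  obtain ⟨T', hT'sub, hT'sum⟩ := subsetSum_cover hp (fun i => ((γ i : ZMod p)))
    (Finset.univ.erase q) (fun i _ => hγ' i) hcard1 (-(γ q : ZMod p))
  have hqT' : q ∉ T' := fun h => (notMem_erase q _) (hT'sub h)
  set T : Finset (Fin p) := insert q T' with hT
  have hTsum : ∑ i ∈ T, (γ i : ZMod p) = 0 := by
    rw [hT, Finset.sum_insert hqT', hT'sum]; ring
  -- find S with sum α = -(sum β over T)
  have hcard2 : (Finset.univ : Finset (Fin (p - 1))).card = p - 1 := by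
    rw [card_univ, Fintype.card_fin]
  obtain ⟨S, _, hSsum⟩ := subsetSum_cover hp (fun i => ((α i : ZMod p)))
    Finset.univ (fun i _ => hα' i) hcard2 (-(∑ i ∈ T, (β i : ZMod p)))
  -- define x and z
  refine ⟨fun i => if i ∈ S then 1 else 0, fun i => if i ∈ T then 1 else 0, ?_, ?_, ?_⟩
  · have hmem : q ∈ T := mem_insert_self q T'
    show ¬ (p : ℤ) ∣ (if q ∈ T then 1 else 0)
    rw [if_pos hmem]
    intro h
    have := Int.le_of_dvd one_pos h
    omega
  · have hpow : ∀ {P : Prop} [Decidable P], ((if P then (1:ℤ) else 0)) ^ k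
        = if P then 1 else 0 := by
      intro P _
      split
      · exact one_pow k
      · exact zero_pow hk.ne'
    simp only [hpow]
    rw [← ZMod.intCast_zmod_eq_zero_iff_dvd]
    push_cast
    try simp only [apply_ite (fun n : ℤ => (n : ZMod p)), Int.cast_one, Int.cast_zero]
    simp only [mul_ite, mul_one, mul_zero]
    rw [Finset.sum_ite_mem, Finset.univ_inter, Finset.sum_ite_mem, Finset.univ_inter,
      hSsum]
    ring
  · have hpow : ∀ {P : Prop} [Decidable P], ((if P then (1:ℤ) else 0)) ^ k
        = if P then 1 else 0 := by
      intro P _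
      split
      · exact one_pow k
      · exact zero_pow hk.ne'
    simp only [hpow]
    rw [← ZMod.intCast_zmod_eq_zero_iff_dvd]
    push_cast
    try simp only [apply_ite (fun n : ℤ => (n : ZMod p)), Int.cast_one, Int.cast_zero]
    simp only [mul_ite, mul_one, mul_zero]
    rw [Finset.sum_ite_mem, Finset.univ_inter]
    exact hTsum
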